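/- Define π(F, M_s) := (g(F, M_s) - g(F, M_s*(F)))/(M_s - M_s*(F)) · F when M_s ≠ M_s*(F), and π(F, M_s) := (∂g/∂M_s)(F, M_s) · F when M_s = M_s*(F). Then π(F, M_s) ≤ 0 for all (F, M_s) ∈ [0,∞) × [0,∞). -/

import Mathlib

noncomputable def gfun (bE nE dE dM gs k nu : ℝ) (F Ms : ℝ) : ℝ :=
  if 0 < F then
    nu * (1 - nu) * bE ^ 2 * nE ^ 2 * F ^ 2 /
      ((bE * F / k + nE + dE) *
        ((1 - nu) * nE * bE * F + (bE * F / k + nE + dE) * dM * gs * Ms))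
  else 0

noncomputable def Mstar (bE nE dE dM gs k nu Fhat : ℝ) (F : ℝ) : ℝ :=
  (1 - nu) * nE * bE ^ 2 * k * F * (Fhat - F) /
    (gs * dM * (bE * F + k * (nE + dE)) ^ 2)

noncomputable def pifun (bE nE dE dM gs k nu Fhat : ℝ) (F Ms : ℝ) : ℝ :=
  if Ms = Mstar bE nE dE dM gs k nu Fhat F then
    deriv (fun m => gfun bE nE dE dM gs k nu F m) Ms * F
  else
    (gfun bE nE dE dM gs k nu F Ms -
      gfun bE nE dE dM gs k nu F (Mstar bE nE dE dM gs k nu Fhat F)) /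
      (Ms - Mstar bE nE dE dM gs k nu Fhat F) * F

lemma derivkey (c p q m : ℝ) (h : p + q * m ≠ 0) :
    deriv (fun x => c / (p + q * x)) m = -(c * q) / (p + q * m) ^ 2 := by
  have hd : HasDerivAt (fun x : ℝ => p + q * x) q m := by
    simpa using ((hasDerivAt_id m).const_mul q).const_add p
  have := ((hasDerivAt_const m c).div hd h).deriv
  rw [show (fun x => c / (p + q * x)) = ((fun x => c) / fun x => p + q * x) from rfl, this]; ring

lemma quotkey (c p q m₁ m₂ : ℝ) (hc : 0 ≤ c) (hq : 0 < q)
    (h1 : 0 < p + q * m₁) (h2 : 0 < p + q * m₂) (hne : m₁ ≠ m₂) :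
    (c / (p + q * m₁) - c / (p + q * m₂)) / (m₁ - m₂) ≤ 0 := by
  have hnum : c / (p + q * m₁) - c / (p + q * m₂)
      = -(c * q * (m₁ - m₂)) / ((p + q * m₁) * (p + q * m₂)) := by
    field_simp; ring
  rw [hnum, div_div]
  rcases lt_or_gt_of_ne (sub_ne_zero.mpr hne) with hd | hd
  · apply div_nonpos_of_nonneg_of_nonpos
    · nlinarith [mul_nonneg hc hq.le]
    · nlinarith [mul_pos h1 h2]
  · apply div_nonpos_of_nonpos_of_nonneg
    · nlinarith [mul_nonneg hc hq.le]
    · nlinarith [mul_pos h1 h2]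

theorem stmt_9 (bE nE dE dM gs k nu Fhat : ℝ)
    (hbE : 0 < bE) (hnE : 0 < nE) (hdE : 0 < dE) (hdM : 0 < dM)
    (hgs : 0 < gs) (hk : 0 < k) (hnu : nu ∈ Set.Ioo (0:ℝ) 1) (hF : 0 < Fhat) :
    ∀ F Ms : ℝ, 0 ≤ F → 0 ≤ Ms → pifun bE nE dE dM gs k nu Fhat F Ms ≤ 0 := by
  obtain ⟨hnu0, hnu1⟩ := hnu
  have h1nu : 0 < 1 - nu := by linarith
  intro F Ms hF0 hMs0
  rcases eq_or_lt_of_le hF0 with hF0' | hFpos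
  · unfold pifun; split_ifs <;> simp [← hF0']
  -- F > 0 case
  set A : ℝ := bE * F / k + nE + dE with hAdef
  have hA : 0 < A := by positivity
  set c : ℝ := nu * (1 - nu) * bE ^ 2 * nE ^ 2 * F ^ 2 with hcdef
  have hc : 0 ≤ c := by positivity
  set p : ℝ := A * ((1 - nu) * nE * bE * F) with hpdef
  set q : ℝ := A * (A * dM * gs) with hqdef
  have hq : 0 < q := by positivity
  have hgf : ∀ m : ℝ, gfun bE nE dE dM gs k nu F m = c / (p + q * m) := by
    intro m
    simp only [gfun, if_pos hFpos, hcdef, hpdef, hqdef, hAdef]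
    congr 1; ring
  have hS : 0 < bE * F + k * (nE + dE) := by positivity
  have hMstar : 0 < p + q * Mstar bE nE dE dM gs k nu Fhat F := by
    have heq : p + q * Mstar bE nE dE dM gs k nu Fhat F
        = A * ((1 - nu) * nE * bE * F * (bE * Fhat + k * (nE + dE)))
            / (bE * F + k * (nE + dE)) := by
      simp only [Mstar, hpdef, hqdef, hAdef]
      field_simp
      ring
    rw [heq]; positivity
  have hMs : 0 < p + q * Ms := by positivity
  unfold pifun
  split_ifs with hcase
  · have hfun : (fun m => gfun bE nE dE dM gs k nu F m) = fun m => c / (p + q * m) := by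
      funext m; exact hgf m
    rw [hfun, derivkey c p q Ms (by rw [hcase]; exact hMstar.ne')]
    apply mul_nonpos_of_nonpos_of_nonneg _ hF0
    apply div_nonpos_of_nonpos_of_nonneg
    · nlinarith [mul_nonneg hc hq.le]
    · positivity
  · rw [hgf, hgf]
    exact mul_nonpos_of_nonpos_of_nonneg (quotkey c p q Ms _ hc hq hMs hMstar hcase) hF0
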